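/- For each p with n_p ≥ 2 and every ν ∈ ℤ_{≥0}^{n−1} with ∑_{a=1}^{n_p−1} ν_a > k_p, the operator ∏_{a=1}^{n_p−1} x̃_a(z_p)^{ν_a} annihilates the whole filtered tensor product F_Z; in particular it annihilates the cyclic vector v = v_{k_1}^{(n_1)} ⊗ ⋯ ⊗ v_{k_N}^{(n_N)}. -/

import Mathlib

open MvPolynomial

noncomputable section

/-- The ideal `J_k^{(m)}` of `ℂ[x_1,…,x_{n-1}]`: generated by `x_m,…,x_{n-1}` and all
monomials of degree `k+1` in `x_1,…,x_{m-1}`. -/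
def Jmk (n m k : ℕ) : Ideal (MvPolynomial (Fin (n - 1)) ℂ) :=
  Ideal.span
    ({u | ∃ i : Fin (n - 1), m ≤ i.val + 1 ∧ u = X i} ∪
     {u | ∃ ν : Fin (n - 1) → ℕ, (∀ i : Fin (n - 1), m ≤ i.val + 1 → ν i = 0) ∧
        (∑ i, ν i) = k + 1 ∧ u = ∏ i, X i ^ ν i})

/-- `V_k^{(m)}` -/
abbrev Vmk (n m k : ℕ) := MvPolynomial (Fin (n - 1)) ℂ ⧸ Jmk n m k

variable (n N : ℕ) (nn kk : Fin N → ℕ)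

/-- The tensor product `F_Z = V_{k_1}^{(n_1)} ⊗ ⋯ ⊗ V_{k_N}^{(n_N)}`. -/
abbrev FZten := PiTensorProduct ℂ (fun p : Fin N => Vmk n (nn p) (kk p))

/-- `x_a^{(p)}`: multiplication by `x_a` on the `p`-th tensor factor. -/
def xfac (a : Fin (n - 1)) (p : Fin N) :
    Module.End ℂ (FZten n N nn kk) :=
  PiTensorProduct.map (Function.update
    (fun q => (LinearMap.id : Vmk n (nn q) (kk q) →ₗ[ℂ] Vmk n (nn q) (kk q))) p
    (LinearMap.mulLeft ℂ (Ideal.Quotient.mk (Jmk n (nn p) (kk p)) (X a))))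

variable (z : Fin N → ℂ)

/-- the operator `x_a[i] = ∑_p z_p^i x_a^{(p)}` -/
def xopF (a : Fin (n - 1)) (i : ℕ) : Module.End ℂ (FZten n N nn kk) :=
  ∑ p : Fin N, z p ^ i • xfac n N nn kk a p

/-- `X_a = {p : n_p > a}` -/
def Xset (a : Fin (n - 1)) : Finset (Fin N) :=
  Finset.univ.filter (fun p => a.val + 1 < nn p)

/-- `N_a = |X_a|` -/
def NcF (a : Fin (n - 1)) : ℕ := (Xset n N nn a).card

/-- the `s`-th elementary symmetric polynomial of the `z_p`, `p ∈ X_a` -/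
def esymZ (a : Fin (n - 1)) (s : ℕ) : ℂ :=
  ∑ S ∈ (Xset n N nn a).powersetCard s, ∏ p ∈ S, z p

/-- `x̃_a[i] = ∑_{s=0}^i (-1)^s x_a[i-s] σ_{a,s}` -/
def xtil (a : Fin (n - 1)) (i : ℕ) : Module.End ℂ (FZten n N nn kk) :=
  ∑ s ∈ Finset.range (i + 1),
    ((-1 : ℂ) ^ s * esymZ n N nn z a s) • xopF n N nn kk z a (i - s)

/-- `x̃_a(w) = ∑_{i=0}^{N_a-1} x̃_a[i] w^{N_a-1-i}` -/
def xtilz (a : Fin (n - 1)) (w : ℂ) : Module.End ℂ (FZten n N nn kk) :=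
  ∑ i ∈ Finset.range (NcF n N nn a),
    w ^ (NcF n N nn a - 1 - i) • xtil n N nn kk z a i


/-! ### Auxiliary lemmas -/

open Finset in
/-- Vieta: product expansion into elementary symmetric sums. -/
theorem vietaC {α : Type*} [DecidableEq α] (S : Finset α) (zz : α → ℂ) (t : ℂ) :
    ∏ r ∈ S, (t - zz r) =
      ∑ s ∈ range (S.card + 1),
        (-1) ^ s * (∑ T ∈ S.powersetCard s, ∏ r ∈ T, zz r) * t ^ (S.card - s) := by
  have h1 : ∀ r ∈ S, t - zz r = (-zz r) + t := fun r _ => by ring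
  rw [Finset.prod_congr rfl h1, Finset.prod_add]
  erw [S.powerset_card_disjiUnion, Finset.sum_disjiUnion]
  refine Finset.sum_congr rfl fun s hs => ?_
  have step : ∀ T ∈ S.powersetCard s,
      (∏ r ∈ T, -zz r) * ∏ _r ∈ S \ T, t
        = (-1) ^ s * (∏ r ∈ T, zz r) * t ^ (S.card - s) := by
    intro T hT
    rw [Finset.mem_powersetCard] at hT
    have hneg : ∏ r ∈ T, -zz r = (-1) ^ T.card * ∏ r ∈ T, zz r := by
      rw [← Finset.prod_const (-1 : ℂ), ← Finset.prod_mul_distrib]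
      exact Finset.prod_congr rfl fun r _ => (neg_one_mul _).symm
    rw [hneg, Finset.prod_const, Finset.card_sdiff_of_subset hT.1, hT.2]
  rw [Finset.sum_congr rfl step, ← Finset.sum_mul, ← Finset.mul_sum]

open Finset in
/-- Telescoping key identity. -/
theorem keyC (Nc : ℕ) (σ : ℕ → ℂ) (hσ : σ 0 = 1) (w t : ℂ) :
    (w - t) * ∑ i ∈ range Nc, w ^ (Nc - 1 - i) *
        (∑ s ∈ range (i + 1), (-1) ^ s * σ s * t ^ (i - s)) =
      (∑ s ∈ range (Nc + 1), (-1) ^ s * σ s * w ^ (Nc - s)) -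
      (∑ s ∈ range (Nc + 1), (-1) ^ s * σ s * t ^ (Nc - s)) := by
  set g : ℕ → ℂ := fun i => ∑ s ∈ range (i + 1), (-1) ^ s * σ s * t ^ (i - s) with hg
  have g_succ : ∀ i, g (i + 1) = t * g i + (-1) ^ (i + 1) * σ (i + 1) := by
    intro i
    rw [hg]
    simp only
    rw [Finset.sum_range_succ, Nat.sub_self, pow_zero, mul_one, Finset.mul_sum]
    congr 1
    refine Finset.sum_congr rfl fun s hs => ?_
    rw [Finset.mem_range] at hs
    have : i + 1 - s = (i - s) + 1 := by omega
    rw [this, pow_succ]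
    ring
  have g0 : g 0 = 1 := by simp [hg, hσ]
  set h : ℕ → ℂ := fun i => w ^ (Nc - i) * g i with hh
  have main : ∀ i ∈ range Nc, (w - t) * (w ^ (Nc - 1 - i) * g i)
      = (h i - h (i + 1)) + w ^ (Nc - 1 - i) * ((-1) ^ (i + 1) * σ (i + 1)) := by
    intro i hi
    rw [Finset.mem_range] at hi
    have e1 : Nc - i = (Nc - 1 - i) + 1 := by omega
    have e2 : Nc - (i + 1) = Nc - 1 - i := by omega
    rw [hh]
    simp only
    rw [g_succ i, e1, e2, pow_succ]
    ring
  rw [Finset.mul_sum, Finset.sum_congr rfl main, Finset.sum_add_distrib,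
    Finset.sum_range_sub' h]
  have htel : h 0 = w ^ Nc := by simp [hh, g0]
  have hend : h Nc = g Nc := by simp [hh]
  have hsum2 : ∑ i ∈ range Nc, w ^ (Nc - 1 - i) * ((-1) ^ (i + 1) * σ (i + 1))
      = (∑ s ∈ range (Nc + 1), (-1) ^ s * σ s * w ^ (Nc - s)) - w ^ Nc := by
    rw [Finset.sum_range_succ' (fun s => (-1 : ℂ) ^ s * σ s * w ^ (Nc - s)) Nc]
    simp only [pow_zero, hσ, one_mul, Nat.sub_zero]
    rw [add_sub_cancel_right]
    refine Finset.sum_congr rfl fun i hi => ?_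
    have : Nc - (i + 1) = Nc - 1 - i := by omega
    rw [this]
    ring
  rw [htel, hend, hsum2, hg]
  ring

/-- A `PiTensorProduct.map` with one zero component is zero. -/
theorem piMap_eq_zero {ι : Type*} {M M' : ι → Type*}
    [∀ i, AddCommMonoid (M i)] [∀ i, AddCommMonoid (M' i)]
    [∀ i, Module ℂ (M i)] [∀ i, Module ℂ (M' i)]
    (f : ∀ i, M i →ₗ[ℂ] M' i) (p : ι) (h : f p = 0) :
    PiTensorProduct.map f = 0 := by
  apply LinearMap.ext; intro x
  induction x using PiTensorProduct.induction_on with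
  | smul_tprod c m =>
    rw [LinearMap.map_smul, PiTensorProduct.map_tprod,
      (PiTensorProduct.tprod ℂ).map_coord_zero p (by simp [h]), smul_zero,
      LinearMap.zero_apply]
  | add x y hx hy => simp [hx, hy]

/-- Multiplication by (the class of) a polynomial `f` on the `p`-th tensor factor. -/
def opP (p : Fin N) (f : MvPolynomial (Fin (n - 1)) ℂ) : Module.End ℂ (FZten n N nn kk) :=
  PiTensorProduct.map (Function.update
    (fun q => (LinearMap.id : Vmk n (nn q) (kk q) →ₗ[ℂ] Vmk n (nn q) (kk q))) p
    (LinearMap.mulLeft ℂ (Ideal.Quotient.mk (Jmk n (nn p) (kk p)) f)))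

theorem xfac_eq (a : Fin (n - 1)) (p : Fin N) :
    xfac n N nn kk a p = opP n N nn kk p (X a) := rfl

theorem opP_mul (p : Fin N) (f g : MvPolynomial (Fin (n - 1)) ℂ) :
    opP n N nn kk p f * opP n N nn kk p g = opP n N nn kk p (f * g) := by
  rw [Module.End.mul_eq_comp]
  unfold opP
  rw [← PiTensorProduct.map_comp]
  congr 1
  funext q
  rcases eq_or_ne q p with rfl | hq
  · simp only [Function.update_self]
    rw [map_mul, LinearMap.mulLeft_mul]
  · simp [Function.update_of_ne hq]

theorem opP_one (p : Fin N) : opP n N nn kk p 1 = 1 := by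
  unfold opP
  rw [map_one, LinearMap.mulLeft_one, Function.update_eq_self]
  exact PiTensorProduct.map_id

theorem opP_pow (p : Fin N) (f : MvPolynomial (Fin (n - 1)) ℂ) (k : ℕ) :
    (opP n N nn kk p f) ^ k = opP n N nn kk p (f ^ k) := by
  induction k with
  | zero => rw [pow_zero, pow_zero, opP_one]
  | succ k ih => rw [pow_succ, pow_succ, ih, opP_mul]

theorem opP_eq_zero (p : Fin N) (f : MvPolynomial (Fin (n - 1)) ℂ)
    (h : f ∈ Jmk n (nn p) (kk p)) : opP n N nn kk p f = 0 := by
  apply piMap_eq_zero _ p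
  rw [Function.update_self, Ideal.Quotient.eq_zero_iff_mem.2 h,
    LinearMap.mulLeft_zero_eq_zero]

theorem xfac_zero (a : Fin (n - 1)) (q : Fin N) (h : ¬ (a.val + 1 < nn q)) :
    xfac n N nn kk a q = 0 := by
  apply piMap_eq_zero _ q
  have hmem : (X a : MvPolynomial (Fin (n - 1)) ℂ) ∈ Jmk n (nn q) (kk q) :=
    Ideal.subset_span (Or.inl ⟨a, by omega, rfl⟩)
  rw [Function.update_self, Ideal.Quotient.eq_zero_iff_mem.2 hmem,
    LinearMap.mulLeft_zero_eq_zero]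

theorem monomial_mem_J (n m k : ℕ) (e : Fin (n - 1) → ℕ)
    (hs : ∀ i : Fin (n - 1), m ≤ i.val + 1 → e i = 0) (hd : k + 1 ≤ ∑ i, e i) :
    (∏ i, X i ^ e i) ∈ Jmk n m k := by
  obtain ⟨t, ht⟩ : ∃ t, ∑ i, e i = k + 1 + t := ⟨∑ i, e i - (k + 1), by omega⟩
  clear hd
  induction t generalizing e with
  | zero => exact Ideal.subset_span (Or.inr ⟨e, hs, by omega, rfl⟩)
  | succ t ih =>
    have hpos : ∃ a, e a ≠ 0 := by
      by_contra hc
      push_neg at hc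
      simp only [hc, Finset.sum_const_zero] at ht
      omega
    obtain ⟨a, ha⟩ := hpos
    have hprod : (∏ i, X i ^ e i : MvPolynomial (Fin (n - 1)) ℂ)
        = X a * ∏ i, X i ^ (Function.update e a (e a - 1)) i := by
      rw [← Finset.mul_prod_erase Finset.univ _ (Finset.mem_univ a),
          ← Finset.mul_prod_erase Finset.univ
            (fun i => (X i : MvPolynomial (Fin (n - 1)) ℂ) ^ (Function.update e a (e a - 1)) i)
            (Finset.mem_univ a),
          Function.update_self, ← mul_assoc]
      congr 1
      · rw [← pow_succ']
        congr 1
        omega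
      · exact Finset.prod_congr rfl fun i hi => by
          rw [Function.update_of_ne (Finset.ne_of_mem_erase hi)]
    rw [hprod]
    refine Ideal.mul_mem_left _ _ (ih _ ?_ ?_)
    · intro i hi
      rcases eq_or_ne i a with rfl | h
      · exact absurd (hs i hi) ha
      · rw [Function.update_of_ne h]; exact hs i hi
    · rw [Finset.sum_update_of_mem (Finset.mem_univ a)]
      have h1 := Finset.add_sum_erase Finset.univ e (Finset.mem_univ a)
      rw [Finset.erase_eq] at h1
      omega

theorem esymZ_zero (a : Fin (n - 1)) : esymZ n N nn z a 0 = 1 := by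
  simp [esymZ, Finset.powersetCard_zero]

theorem xtilz_eq_smul (hz : ∀ p q : Fin N, p ≠ q → z p ≠ z q)
    (p : Fin N) (a : Fin (n - 1)) (hap : a.val + 1 < nn p) :
    ∃ c : ℂ, xtilz n N nn kk z a (z p) = c • xfac n N nn kk a p := by
  set S := Xset n N nn a with hS
  set Nc := NcF n N nn a with hNc
  set σ : ℕ → ℂ := fun s => esymZ n N nn z a s with hσ
  set C : Fin N → ℂ := fun q => ∑ i ∈ Finset.range Nc, (z p) ^ (Nc - 1 - i) *
    (∑ s ∈ Finset.range (i + 1), (-1) ^ s * σ s * (z q) ^ (i - s)) with hC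
  have hpS : p ∈ S := Finset.mem_filter.2 ⟨Finset.mem_univ p, hap⟩
  have stepA : xtilz n N nn kk z a (z p) = ∑ q : Fin N, C q • xfac n N nn kk a q := by
    calc xtilz n N nn kk z a (z p)
        = ∑ i ∈ Finset.range Nc, ∑ q : Fin N, ∑ s ∈ Finset.range (i + 1),
            ((z p) ^ (Nc - 1 - i) * ((-1) ^ s * σ s * (z q) ^ (i - s))) •
              xfac n N nn kk a q := by
          simp only [xtilz, xtil, xopF, Finset.smul_sum, smul_smul, ← hNc, ← hσ]
          exact Finset.sum_congr rfl fun i _ => Finset.sum_comm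
      _ = ∑ q : Fin N, ∑ i ∈ Finset.range Nc, ∑ s ∈ Finset.range (i + 1),
            ((z p) ^ (Nc - 1 - i) * ((-1) ^ s * σ s * (z q) ^ (i - s))) •
              xfac n N nn kk a q := Finset.sum_comm
      _ = ∑ q : Fin N, C q • xfac n N nn kk a q := by
          refine Finset.sum_congr rfl fun q _ => ?_
          rw [hC]
          simp only [Finset.mul_sum, Finset.sum_smul]
  have hP0 : ∀ r ∈ S, ∑ s ∈ Finset.range (Nc + 1), (-1) ^ s * σ s * (z r) ^ (Nc - s) = 0 := by
    intro r hr
    rw [show (∑ s ∈ Finset.range (Nc + 1), (-1) ^ s * σ s * (z r) ^ (Nc - s))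
        = ∏ r' ∈ S, (z r - z r') from (vietaC S z (z r)).symm]
    exact Finset.prod_eq_zero hr (sub_self _)
  have hCq : ∀ q ∈ S, q ≠ p → C q = 0 := by
    intro q hq hqp
    have hσ0 : σ 0 = 1 := by rw [hσ]; exact esymZ_zero n N nn z a
    have hk' : (z p - z q) * C q = 0 := by
      rw [hC]
      rw [keyC Nc σ hσ0 (z p) (z q), hP0 p hpS, hP0 q hq, sub_self]
    have hne : z p - z q ≠ 0 := sub_ne_zero.2 (hz p q (Ne.symm hqp))
    exact (mul_eq_zero.1 hk').resolve_left hne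
  refine ⟨C p, ?_⟩
  rw [stepA]
  rw [← Finset.sum_subset (Finset.subset_univ S) (fun q _ hq => by
    rw [xfac_zero n N nn kk a q (by simpa [hS, Xset] using hq), smul_zero])]
  exact Finset.sum_eq_single_of_mem p hpS fun q hq hqp => by
    rw [hCq q hq hqp, zero_smul]

theorem listProd (p : Fin N) : ∀ (m : ℕ) (c : Fin m → ℂ)
    (f : Fin m → MvPolynomial (Fin (n - 1)) ℂ),
    (List.ofFn fun a => c a • opP n N nn kk p (f a)).prod
      = (∏ a, c a) • opP n N nn kk p (∏ a, f a)
  | 0, c, f => by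
    simp [List.ofFn_zero, opP_one]
  | (m + 1), c, f => by
    rw [List.ofFn_succ, List.prod_cons,
      listProd p m (fun a => c a.succ) (fun a => f a.succ),
      smul_mul_smul_comm, opP_mul, ← Fin.prod_univ_succ, ← Fin.prod_univ_succ]
/-- Lemma 2.2 (ii): for each `p` with `n_p ≥ 2` and every
`ν ∈ ℤ_{≥0}^{n-1}` supported on `a ≤ n_p - 1` with `∑_{a=1}^{n_p-1} ν_a > k_p`,
the operator `∏_{a=1}^{n_p-1} x̃_a(z_p)^{ν_a}` annihilates the whole filtered tensor
product `F_Z`; in particular it annihilates the cyclic vector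
`v = v_{k_1}^{(n_1)} ⊗ ⋯ ⊗ v_{k_N}^{(n_N)}`. -/
theorem stmt3 (n N : ℕ) (hn : 2 ≤ n) (hN : 1 ≤ N) (nn kk : Fin N → ℕ)
    (hnn : ∀ p, 1 ≤ nn p ∧ nn p ≤ n)
    (z : Fin N → ℂ) (hz : ∀ p q : Fin N, p ≠ q → z p ≠ z q)
    (p : Fin N) (hp : 2 ≤ nn p)
    (ν : Fin (n - 1) → ℕ)
    (hν : kk p < ∑ a ∈ Finset.univ.filter (fun a : Fin (n - 1) => a.val + 1 < nn p), ν a) :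
    (List.ofFn fun a : Fin (n - 1) => (xtilz n N nn kk z a (z p)) ^ (if a.val + 1 < nn p then ν a else 0)).prod = 0 ∧
    (List.ofFn fun a : Fin (n - 1) => (xtilz n N nn kk z a (z p)) ^ (if a.val + 1 < nn p then ν a else 0)).prod
      (PiTensorProduct.tprod ℂ (fun q => Ideal.Quotient.mk (Jmk n (nn q) (kk q)) 1)) = 0 := by
  have h2 : 2 ≤ n := hn
  set e : Fin (n - 1) → ℕ := fun a => if a.val + 1 < nn p then ν a else 0 with he
  have hfac : ∀ a : Fin (n - 1), ∃ c : ℂ,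
      (xtilz n N nn kk z a (z p)) ^ (e a) = c • opP n N nn kk p (X a ^ e a) := by
    intro a
    by_cases hap : a.val + 1 < nn p
    · obtain ⟨c, hc⟩ := xtilz_eq_smul n N nn kk z hz p a hap
      exact ⟨c ^ e a, by rw [hc, xfac_eq, smul_pow, opP_pow]⟩
    · refine ⟨1, ?_⟩
      have : e a = 0 := by simp [he, hap]
      rw [this, pow_zero, pow_zero, opP_one, one_smul]
  choose c hc using hfac
  have hlist : (List.ofFn fun a : Fin (n - 1) =>
        (xtilz n N nn kk z a (z p)) ^ (if a.val + 1 < nn p then ν a else 0))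
      = List.ofFn fun a : Fin (n - 1) => c a • opP n N nn kk p (X a ^ e a) :=
    congrArg List.ofFn (funext fun a => hc a)
  have hzero : (List.ofFn fun a : Fin (n - 1) =>
      (xtilz n N nn kk z a (z p)) ^ (if a.val + 1 < nn p then ν a else 0)).prod = 0 := by
    rw [hlist, listProd n N nn kk p (n - 1) c (fun a => X a ^ e a)]
    have hmem : (∏ a : Fin (n - 1), (X a : MvPolynomial (Fin (n - 1)) ℂ) ^ e a)
        ∈ Jmk n (nn p) (kk p) := by
      refine monomial_mem_J n (nn p) (kk p) e (fun i hi => by simp [he]; omega) ?_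
      have : ∑ i, e i = ∑ a ∈ Finset.univ.filter
          (fun a : Fin (n - 1) => a.val + 1 < nn p), ν a := by
        rw [Finset.sum_filter]
      omega
    rw [opP_eq_zero n N nn kk p _ hmem, smul_zero]
  exact ⟨hzero, by rw [hzero]; rfl⟩

end
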